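/- Let L/K be a finite Galois extension of degree m whose Galois group is cyclic with generator σ. Let t be an integer with 0 ≤ t ≤ m − 1 and let a_0, a_1, ..., a_t ∈ L with a_t ≠ 0. Then the kernel of the K-linear endomorphism of L defined by β ↦ Σ_{i=0}^{t} a_i · σ^i(β) has K-dimension at most t. -/

import Mathlib

/-- The `K`-linear endomorphism of `L` given by `β ↦ ∑_{i=0}^{t} a_i * σ^i(β)`. -/
noncomputable def sigmaPoly {K L : Type*} [Field K] [Field L] [Algebra K L]
    (σ : L ≃ₐ[K] L) (t : ℕ) (a : ℕ → L) : L →ₗ[K] L where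
  toFun β := ∑ i ∈ Finset.range (t + 1), a i * (σ ^ i) β
  map_add' := by
    intro x y
    simp [map_add, mul_add, Finset.sum_add_distrib]
  map_smul' := by
    intro c x
    simp [map_smul, mul_smul_comm, Finset.smul_sum]

section Aux

open Finset Module LinearMap

lemma sigmaPoly_apply' {K L : Type*} [Field K] [Field L] [Algebra K L]
    (σ : L ≃ₐ[K] L) (t : ℕ) (a : ℕ → L) (x : L) :
    sigmaPoly σ t a x = ∑ i ∈ Finset.range (t + 1), a i * (σ ^ i) x := rfl

/-- Abel-type telescoping identity. -/
lemma telescope_aux {L : Type*} [CommRing L] :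
    ∀ (n : ℕ) (b y : ℕ → L),
      ∑ j ∈ Finset.range n, (∑ i ∈ Finset.Ioc j n, b i) * (y (j + 1) - y j)
        = ∑ i ∈ Finset.range (n + 1), b i * y i
            - (∑ i ∈ Finset.range (n + 1), b i) * y 0 := by
  intro n
  induction n with
  | zero => intro b y; simp
  | succ n ih =>
    intro b y
    rw [Finset.sum_range_succ]
    have h1 : ∀ j ∈ Finset.range n,
        (∑ i ∈ Finset.Ioc j (n + 1), b i) * (y (j + 1) - y j)
          = (∑ i ∈ Finset.Ioc j n, b i) * (y (j + 1) - y j)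
              + b (n + 1) * (y (j + 1) - y j) := by
      intro j hj
      rw [Finset.sum_Ioc_succ_top (Nat.le_of_lt (Finset.mem_range.mp hj)), add_mul]
    rw [Finset.sum_congr rfl h1, Finset.sum_add_distrib, ih, ← Finset.mul_sum,
      Finset.sum_range_sub (fun j => y j)]
    rw [Nat.Ioc_succ_singleton, Finset.sum_singleton]
    simp only [Finset.sum_range_succ]
    ring

/-- The kernel of a composition has dimension at most the sum of the dimensions
of the kernels. -/
lemma finrank_ker_comp_le {K L : Type*} [Field K] [Field L] [Algebra K L]
    [FiniteDimensional K L] (f g : L →ₗ[K] L) :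
    finrank K (ker (f ∘ₗ g)) ≤ finrank K (ker f) + finrank K (ker g) := by
  have hfg : ∀ x ∈ ker (f ∘ₗ g), g x ∈ ker f := by
    intro x hx
    simpa [LinearMap.mem_ker] using hx
  set g' : ker (f ∘ₗ g) →ₗ[K] ker f := g.restrict hfg with hg'
  have h1 := LinearMap.finrank_range_add_finrank_ker g'
  have h2 : finrank K (LinearMap.range g') ≤ finrank K (ker f) :=
    Submodule.finrank_le _
  have h3 : finrank K (ker g') ≤ finrank K (ker g) := by
    have hmem : ∀ x : ker g', ((x : ker (f ∘ₗ g)) : L) ∈ ker g := by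
      intro x
      have hx := x.2
      rw [LinearMap.mem_ker] at hx
      have : ((g' x.1 : L)) = 0 := by rw [hx]; rfl
      rw [LinearMap.restrict_apply] at this
      exact LinearMap.mem_ker.mpr this
    let h : ker g' →ₗ[K] ker g :=
      { toFun := fun x => ⟨((x : ker (f ∘ₗ g)) : L), hmem x⟩
        map_add' := fun x y => rfl
        map_smul' := fun c x => rfl }
    have hinj : Function.Injective h := by
      intro x y hxy
      have hval := congrArg Subtype.val hxy
      exact Subtype.ext (Subtype.ext hval)
    exact LinearMap.finrank_le_finrank_of_injective hinj
  omega

/-- The kernel of `σ - 1` is the base field, of dimension `1`. -/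
lemma finrank_ker_sub_one_le {K L : Type*} [Field K] [Field L] [Algebra K L]
    [FiniteDimensional K L] [IsGalois K L] (σ : L ≃ₐ[K] L)
    (hσ : ∀ g : L ≃ₐ[K] L, g ∈ Subgroup.zpowers σ) :
    finrank K (ker (σ.toLinearMap - LinearMap.id)) ≤ 1 := by
  have hker : ker (σ.toLinearMap - LinearMap.id)
      ≤ LinearMap.range (Algebra.linearMap K L) := by
    intro x hx
    rw [LinearMap.mem_ker, LinearMap.sub_apply, sub_eq_zero] at hx
    have hfix : σ ∈ MulAction.stabilizer (L ≃ₐ[K] L) x := by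
      rw [MulAction.mem_stabilizer_iff]
      exact hx
    have hall : ∀ g : L ≃ₐ[K] L, g x = x := by
      intro g
      have hg : g ∈ MulAction.stabilizer (L ≃ₐ[K] L) x :=
        Subgroup.zpowers_le.mpr hfix (hσ g)
      exact hg
    have hx' : x ∈ IntermediateField.fixedField
        (IntermediateField.fixingSubgroup (⊥ : IntermediateField K L)) :=
      fun g => hall g
    rw [IsGalois.fixedField_fixingSubgroup] at hx'
    obtain ⟨k, hk⟩ := IntermediateField.mem_bot.mp hx'
    exact ⟨k, hk⟩
  calc finrank K (ker (σ.toLinearMap - LinearMap.id))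
      ≤ finrank K (LinearMap.range (Algebra.linearMap K L)) :=
        Submodule.finrank_mono hker
    _ = finrank K K := LinearMap.finrank_range_of_inj (algebraMap K L).injective
    _ = 1 := finrank_self K

lemma sigma_key {K L : Type*} [Field K] [Field L] [Algebra K L]
    [FiniteDimensional K L] [IsGalois K L] (σ : L ≃ₐ[K] L)
    (hσ : ∀ g : L ≃ₐ[K] L, g ∈ Subgroup.zpowers σ) :
    ∀ (t : ℕ) (a : ℕ → L), a t ≠ 0 →
      finrank K (ker (sigmaPoly σ t a)) ≤ t := by
  intro t
  induction t with
  | zero =>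
    intro a ha
    have hbot : ker (sigmaPoly σ 0 a) = ⊥ := by
      rw [LinearMap.ker_eq_bot']
      intro x hx
      rw [sigmaPoly_apply'] at hx
      have h0 : a 0 * x = 0 := by simpa using hx
      rcases mul_eq_zero.mp h0 with h | h
      · exact absurd h ha
      · exact h
    rw [hbot, finrank_bot]
  | succ t ih =>
    intro a ha
    set D : L →ₗ[K] L := σ.toLinearMap - LinearMap.id with hD
    by_cases hk : ker (sigmaPoly σ (t + 1) a) = ⊥
    · rw [hk, finrank_bot]; exact Nat.zero_le _
    · obtain ⟨β, hβmem, hβ⟩ := Submodule.ne_bot_iff _ |>.mp hk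
      -- the coefficients of `x ↦ f (β * x)`
      set b : ℕ → L := fun i => a i * (σ ^ i) β with hb
      -- the coefficients of the degree-`t` factor
      set c : ℕ → L := fun j => ∑ i ∈ Finset.Ioc j (t + 1), b i with hc
      have hbsum : ∑ i ∈ Finset.range (t + 2), b i = 0 := by
        have := hβmem
        rw [LinearMap.mem_ker, sigmaPoly_apply'] at this
        exact this
      -- Step 1 : `sigmaPoly σ (t+1) b = sigmaPoly σ (t+1) a ∘ mul_β`
      have hstep1 : sigmaPoly σ (t + 1) b
          = (sigmaPoly σ (t + 1) a) ∘ₗ (LinearMap.mulLeft K β) := by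
        apply LinearMap.ext
        intro x
        rw [LinearMap.comp_apply, sigmaPoly_apply', sigmaPoly_apply']
        apply Finset.sum_congr rfl
        intro i _
        rw [hb]
        simp only [LinearMap.mulLeft_apply, map_mul]
        ring
      -- Step 2 : `sigmaPoly σ (t+1) b = sigmaPoly σ t c ∘ (σ - 1)`
      have hstep2 : sigmaPoly σ (t + 1) b
          = (sigmaPoly σ t c) ∘ₗ D := by
        apply LinearMap.ext
        intro x
        rw [LinearMap.comp_apply, sigmaPoly_apply', sigmaPoly_apply']
        have hDx : D x = σ x - x := rfl
        have hpt : ∀ j : ℕ, (σ ^ j) (D x)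
            = (σ ^ (j + 1)) x - (σ ^ j) x := by
          intro j
          rw [hDx, map_sub, pow_succ, AlgEquiv.mul_apply]
        have := telescope_aux (t + 1) b (fun i => (σ ^ i) x)
        rw [hbsum, zero_mul, sub_zero] at this
        calc ∑ i ∈ Finset.range (t + 1 + 1), b i * (σ ^ i) x
            = ∑ j ∈ Finset.range (t + 1),
                (∑ i ∈ Finset.Ioc j (t + 1), b i) * ((σ ^ (j + 1)) x - (σ ^ j) x) :=
              this.symm
          _ = ∑ j ∈ Finset.range (t + 1), c j * (σ ^ j) (D x) := by
              apply Finset.sum_congr rfl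
              intro j _
              rw [hpt j, hc]
      -- the top coefficient of `c` is nonzero
      have hct : c t ≠ 0 := by
        have : c t = b (t + 1) := by
          rw [hc]
          simp [Nat.Ioc_succ_singleton]
        rw [this, hb]
        apply mul_ne_zero ha
        intro h
        exact hβ ((σ ^ (t + 1)).injective (h.trans (map_zero _).symm))
      -- collect the inequalities
      have hmul_surj : Function.Surjective (LinearMap.mulLeft K β) := by
        intro y
        exact ⟨β⁻¹ * y, by rw [LinearMap.mulLeft_apply, ← mul_assoc, mul_inv_cancel₀ hβ, one_mul]⟩
      have hker_eq : ker (sigmaPoly σ (t + 1) a)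
          = Submodule.map (LinearMap.mulLeft K β) (ker (sigmaPoly σ (t + 1) b)) := by
        rw [hstep1, LinearMap.ker_comp, Submodule.map_comap_eq,
          LinearMap.range_eq_top.mpr hmul_surj, top_inf_eq]
      have h1 : finrank K (ker (sigmaPoly σ (t + 1) a))
          ≤ finrank K (ker (sigmaPoly σ (t + 1) b)) := by
        rw [hker_eq]
        exact Submodule.finrank_map_le _ _
      have h2 : finrank K (ker (sigmaPoly σ (t + 1) b))
          ≤ finrank K (ker (sigmaPoly σ t c))
              + finrank K (ker D) := by
        rw [hstep2]
        exact finrank_ker_comp_le _ _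
      have h3 := ih c hct
      have h4 : finrank K (ker D) ≤ 1 := finrank_ker_sub_one_le σ hσ
      omega

end Aux

/-- for a cyclic Galois extension `L/K` of degree `m` with Galois
group generated by `σ`, the kernel of `β ↦ ∑_{i=0}^{t} a_i σ^i(β)` (with
`a_t ≠ 0` and `t ≤ m - 1`) has `K`-dimension at most `t`. -/
theorem sigmaDegree_bound (K L : Type*) [Field K] [Field L] [Algebra K L]
    [FiniteDimensional K L] [IsGalois K L] (m : ℕ) (hm : Module.finrank K L = m)
    (σ : L ≃ₐ[K] L) (hσ : ∀ g : L ≃ₐ[K] L, g ∈ Subgroup.zpowers σ)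
    (t : ℕ) (ht : t ≤ m - 1) (a : ℕ → L) (hat : a t ≠ 0) :
    Module.finrank K (LinearMap.ker (sigmaPoly σ t a)) ≤ t :=
  sigma_key σ hσ t a hat
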